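/- arXiv:1005.3096 — 4 statements merged into one kernel-verified Lean document; each statement's English description precedes it below -/
import Mathlib

section
/- Let G be an N×N Hermitian matrix with distinct eigenvalues a_1,…,a_N and corresponding orthonormal eigenvectors, let c ∈ ℝ and v ∈ ℂ^N with all components w_j := |⟨u_j, v⟩|² nonzero, where u_j is the j-th eigenvector. Then a real number λ distinct from all a_j is an eigenvalue of the bordered matrix [[c, v†],[v, G]] if and only if λ − c = Σ_{j=1}^N w_j/(λ − a_j). -/
open Matrix BigOperators

/-- Secular equation for the eigenvalues of a bordered Hermitian matrix:
a real `l` distinct from all eigenvalues `a j` of `G` is an eigenvalue of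
`[[c, v†],[v, G]]` iff `l - c = Σ_j |⟨u_j, v⟩|² / (l - a_j)`. -/
theorem bordered_secular_equation
    (N : ℕ) (G : Matrix (Fin N) (Fin N) ℂ) (hG : G.IsHermitian)
    (a : Fin N → ℝ) (u : Fin N → (Fin N → ℂ))
    (heig : ∀ j, G.mulVec (u j) = (a j : ℂ) • (u j))
    (hortho : ∀ j k, (∑ i, star (u j i) * u k i) = if j = k then 1 else 0)
    (hdistinct : Function.Injective a)
    (c : ℝ) (v : Fin N → ℂ)
    (hw : ∀ j, Complex.normSq (∑ i, star (u j i) * v i) ≠ 0)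
    (l : ℝ) (hl : ∀ j, l ≠ a j) :
    (∃ x : Unit ⊕ Fin N → ℂ, x ≠ 0 ∧
        (Matrix.fromBlocks
          (Matrix.of fun (_ _ : Unit) => (c : ℂ))
          (Matrix.of fun (_ : Unit) j => star (v j))
          (Matrix.of fun i (_ : Unit) => v i)
          G).mulVec x = (l : ℂ) • x)
      ↔
    l - c = ∑ j, Complex.normSq (∑ i, star (u j i) * v i) / (l - a j) := by
  classical
  set s : Fin N → ℂ := fun j => ∑ i, star (u j i) * v i with hs
  have hla : ∀ j, ((l : ℂ) - (a j : ℂ)) ≠ 0 := by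
    intro j h
    apply hl j
    have h2 : (l : ℂ) = (a j : ℂ) := sub_eq_zero.mp h
    exact_mod_cast h2
  -- completeness relation
  have hcomp : ∀ i i', (∑ j, u j i * star (u j i')) = if i = i' then (1:ℂ) else 0 := by
    have hB : (Matrix.of fun j i => star (u j i)) *
        (Matrix.of fun j i => star (u j i))ᴴ = 1 := by
      ext j k
      simpa [Matrix.mul_apply, Matrix.conjTranspose_apply, Matrix.one_apply] using hortho j k
    have hB2 := mul_eq_one_comm.mp hB
    intro i i'
    have h := congrFun (congrFun hB2 i) i'
    simpa [Matrix.mul_apply, Matrix.conjTranspose_apply, Matrix.one_apply] using h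
  -- expansion of any vector in the eigenbasis
  have hexpand : ∀ (z : Fin N → ℂ) i,
      (∑ j, (∑ i', star (u j i') * z i') * u j i) = z i := by
    intro z i
    calc (∑ j, (∑ i', star (u j i') * z i') * u j i)
        = ∑ j, ∑ i', z i' * (u j i * star (u j i')) := by
          refine Finset.sum_congr rfl fun j _ => ?_
          rw [Finset.sum_mul]
          exact Finset.sum_congr rfl fun i' _ => by ring
      _ = ∑ i', z i' * ∑ j, (u j i * star (u j i')) := by
          rw [Finset.sum_comm]
          exact Finset.sum_congr rfl fun i' _ => (Finset.mul_sum _ _ _).symm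
      _ = z i := by
          simp only [hcomp]
          simp
  -- action of G on inner products with eigenvectors
  have hGip : ∀ j (y : Fin N → ℂ),
      (∑ i, star (u j i) * (G.mulVec y) i) = (a j : ℂ) * ∑ i, star (u j i) * y i := by
    intro j y
    have hGcol : ∀ k, (∑ i, G i k * star (u j i)) = (a j : ℂ) * star (u j k) := by
      intro k
      have h1 : (∑ i, G i k * star (u j i)) = star (∑ i, G k i * u j i) := by
        rw [star_sum]
        refine Finset.sum_congr rfl fun i _ => ?_
        rw [star_mul', hG.apply i k]
      have h2 : (∑ i, G k i * u j i) = (G.mulVec (u j)) k := by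
        simp [Matrix.mulVec, dotProduct]
      rw [h1, h2, heig j]
      simp [star_mul', Complex.star_def, Complex.conj_ofReal, mul_comm]
    calc (∑ i, star (u j i) * (G.mulVec y) i)
        = ∑ i, ∑ k, star (u j i) * (G i k * y k) := by
          refine Finset.sum_congr rfl fun i _ => ?_
          simp [Matrix.mulVec, dotProduct, Finset.mul_sum]
      _ = ∑ k, (∑ i, G i k * star (u j i)) * y k := by
          rw [Finset.sum_comm]
          refine Finset.sum_congr rfl fun k _ => ?_
          rw [Finset.sum_mul]
          exact Finset.sum_congr rfl fun i _ => by ring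
      _ = (a j : ℂ) * ∑ i, star (u j i) * y i := by
          simp only [hGcol]
          rw [Finset.mul_sum]
          exact Finset.sum_congr rfl fun k _ => by ring
  have hstars : ∀ j, star (s j) = ∑ i, u j i * star (v i) := by
    intro j
    rw [hs]
    rw [star_sum]
    exact Finset.sum_congr rfl fun i _ => by rw [star_mul', star_star]
  have hmc : ∀ j, s j * star (s j) = (Complex.normSq (s j) : ℂ) := by
    intro j
    rw [← Complex.mul_conj]
    rfl
  -- cast between real and complex secular equations
  have hcast : ((l:ℂ) - (c:ℂ) = ∑ j, (Complex.normSq (s j) : ℂ) / ((l:ℂ) - (a j : ℂ)))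
      ↔ (l - c = ∑ j, Complex.normSq (s j) / (l - a j)) := by
    constructor
    · intro h; exact_mod_cast h
    · intro h; exact_mod_cast h
  constructor
  · rintro ⟨x, hxne, hmul⟩
    set x0 : ℂ := x (Sum.inl ()) with hx0def
    set y : Fin N → ℂ := fun i => x (Sum.inr i) with hydef
    have eq1 : (c : ℂ) * x0 + (∑ i, star (v i) * y i) = (l : ℂ) * x0 := by
      have h := congrFun hmul (Sum.inl ())
      simpa [Matrix.mulVec, dotProduct, Fintype.sum_sum_type, hx0def, hydef] using h
    have eq2 : ∀ i, v i * x0 + (G.mulVec y) i = (l : ℂ) * y i := by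
      intro i
      have h := congrFun hmul (Sum.inr i)
      simpa [Matrix.mulVec, dotProduct, Fintype.sum_sum_type, hx0def, hydef] using h
    set β : Fin N → ℂ := fun j => ∑ i, star (u j i) * y i with hβ
    have hbeta : ∀ j, ((l:ℂ) - (a j : ℂ)) * β j = s j * x0 := by
      intro j
      have h : (∑ i, star (u j i) * (v i * x0 + (G.mulVec y) i))
          = ∑ i, star (u j i) * ((l:ℂ) * y i) :=
        Finset.sum_congr rfl fun i _ => by rw [eq2 i]
      have hL : (∑ i, star (u j i) * (v i * x0 + (G.mulVec y) i))
          = s j * x0 + (a j : ℂ) * β j := by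
        have hsplit : (∑ i, star (u j i) * (v i * x0 + (G.mulVec y) i))
            = (∑ i, star (u j i) * v i) * x0 + ∑ i, star (u j i) * (G.mulVec y) i := by
          rw [Finset.sum_mul, ← Finset.sum_add_distrib]
          exact Finset.sum_congr rfl fun i _ => by ring
        rw [hsplit, hGip j y]
      have hR : (∑ i, star (u j i) * ((l:ℂ) * y i)) = (l:ℂ) * β j := by
        rw [hβ, Finset.mul_sum]
        exact Finset.sum_congr rfl fun i _ => by ring
      rw [hL, hR] at h
      linear_combination -h
    have hyexp : ∀ i, y i = ∑ j, β j * u j i := fun i => (hexpand y i).symm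
    have hx0 : x0 ≠ 0 := by
      intro h0
      apply hxne
      have hb0 : ∀ j, β j = 0 := by
        intro j
        have h := hbeta j
        rw [h0, mul_zero] at h
        exact (mul_eq_zero.mp h).resolve_left (hla j)
      funext p
      cases p with
      | inl un => cases un; exact h0
      | inr i =>
        show y i = 0
        rw [hyexp i]
        simp [hb0]
    have hsum : (∑ i, star (v i) * y i) = ∑ j, β j * star (s j) := by
      calc (∑ i, star (v i) * y i)
          = ∑ i, ∑ j, β j * (u j i * star (v i)) := by
            refine Finset.sum_congr rfl fun i _ => ?_
            rw [hyexp i, Finset.mul_sum]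
            exact Finset.sum_congr rfl fun j _ => by ring
        _ = ∑ j, β j * star (s j) := by
            rw [Finset.sum_comm]
            refine Finset.sum_congr rfl fun j _ => ?_
            rw [hstars j, Finset.mul_sum]
    have hbval : ∀ j, β j = s j * x0 / ((l:ℂ) - (a j : ℂ)) := by
      intro j
      rw [eq_div_iff (hla j), mul_comm]
      exact hbeta j
    have hmain : ((l:ℂ) - (c:ℂ)) * x0
        = (∑ j, (Complex.normSq (s j) : ℂ) / ((l:ℂ) - (a j : ℂ))) * x0 := by
      have h1 : (∑ j, β j * star (s j))
          = (∑ j, (Complex.normSq (s j) : ℂ) / ((l:ℂ) - (a j : ℂ))) * x0 := by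
        rw [Finset.sum_mul]
        refine Finset.sum_congr rfl fun j _ => ?_
        rw [hbval j, ← hmc j]
        field_simp
      rw [← h1]
      rw [hsum] at eq1
      linear_combination -eq1
    have := mul_right_cancel₀ hx0 hmain
    exact hcast.mp this
  · intro hsec
    have hC : ((l:ℂ) - (c:ℂ)) = ∑ j, (Complex.normSq (s j) : ℂ) / ((l:ℂ) - (a j : ℂ)) :=
      hcast.mpr hsec
    set y : Fin N → ℂ := fun i => ∑ j, s j / ((l:ℂ) - (a j : ℂ)) * u j i with hydef
    refine ⟨Sum.elim (fun _ => (1:ℂ)) y, ?_, ?_⟩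
    · intro h
      have := congrFun h (Sum.inl ())
      simp at this
    · funext p
      cases p with
      | inl un =>
        cases un
        have hsum : (∑ i, star (v i) * y i)
            = ∑ j, (Complex.normSq (s j) : ℂ) / ((l:ℂ) - (a j : ℂ)) := by
          calc (∑ i, star (v i) * y i)
              = ∑ i, ∑ j, (s j / ((l:ℂ) - (a j : ℂ))) * (u j i * star (v i)) := by
                refine Finset.sum_congr rfl fun i _ => ?_
                rw [hydef]
                rw [Finset.mul_sum]
                exact Finset.sum_congr rfl fun j _ => by ring
            _ = ∑ j, (Complex.normSq (s j) : ℂ) / ((l:ℂ) - (a j : ℂ)) := by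
                rw [Finset.sum_comm]
                refine Finset.sum_congr rfl fun j _ => ?_
                rw [← Finset.mul_sum, ← hstars j, ← hmc j]
                field_simp
        show (Matrix.fromBlocks _ _ _ G).mulVec (Sum.elim (fun _ => (1:ℂ)) y) (Sum.inl ())
            = ((l:ℂ) • Sum.elim (fun _ => (1:ℂ)) y) (Sum.inl ())
        simp only [Matrix.mulVec, dotProduct, Fintype.sum_sum_type,
          Matrix.fromBlocks_apply₁₁, Matrix.fromBlocks_apply₁₂, Sum.elim_inl, Sum.elim_inr,
          Matrix.of_apply, Pi.smul_apply, smul_eq_mul]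
        simp only [Finset.univ_unique, Finset.sum_singleton, mul_one]
        rw [hsum, ← hC]
        ring
      | inr i =>
        have hGy : (∑ k, G i k * y k) = ∑ j, s j / ((l:ℂ) - (a j : ℂ)) * ((a j : ℂ) * u j i) := by
          calc (∑ k, G i k * y k)
              = ∑ k, ∑ j, (s j / ((l:ℂ) - (a j : ℂ))) * (G i k * u j k) := by
                refine Finset.sum_congr rfl fun k _ => ?_
                rw [hydef, Finset.mul_sum]
                exact Finset.sum_congr rfl fun j _ => by ring
            _ = ∑ j, s j / ((l:ℂ) - (a j : ℂ)) * ((a j : ℂ) * u j i) := by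
                rw [Finset.sum_comm]
                refine Finset.sum_congr rfl fun j _ => ?_
                rw [← Finset.mul_sum]
                congr 1
                have : (∑ k, G i k * u j k) = (G.mulVec (u j)) i := by
                  simp [Matrix.mulVec, dotProduct]
                rw [this, heig j]
                simp
        have hvi : v i = ∑ j, s j * u j i := (hexpand v i).symm
        have key : ∀ j : Fin N,
            s j * u j i + s j / ((l:ℂ) - (a j : ℂ)) * ((a j : ℂ) * u j i)
            = (l:ℂ) * (s j / ((l:ℂ) - (a j : ℂ)) * u j i) := by
          intro j
          field_simp [hla j]
          ring
        show (Matrix.fromBlocks _ _ _ G).mulVec (Sum.elim (fun _ => (1:ℂ)) y) (Sum.inr i)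
            = ((l:ℂ) • Sum.elim (fun _ => (1:ℂ)) y) (Sum.inr i)
        simp only [Matrix.mulVec, dotProduct, Fintype.sum_sum_type,
          Matrix.fromBlocks_apply₂₁, Matrix.fromBlocks_apply₂₂, Sum.elim_inl, Sum.elim_inr,
          Matrix.of_apply, Pi.smul_apply, smul_eq_mul]
        simp only [Finset.univ_unique, Finset.sum_singleton, mul_one]
        rw [hGy, hydef]
        rw [Finset.mul_sum]
        rw [hvi]
        rw [← Finset.sum_add_distrib]
        exact Finset.sum_congr rfl fun j _ => key j
end

section
/- Let f : ℝ → ℝ be continuous. Then lim_{r → 0⁺} (1/Γ(r)) ∫_0^x (x−u)^{r−1} f(u) du = f(x) for every x > 0. -/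
open MeasureTheory Set Filter Real
open scoped Topology

/-- `lim_{r → 0⁺} (1/Γ(r)) ∫_0^x (x-u)^{r-1} f(u) du = f(x)` for continuous `f` and `x > 0`. -/
theorem fractional_integral_tendsto
    (f : ℝ → ℝ) (hf : Continuous f) (x : ℝ) (hx : 0 < x) :
    Tendsto (fun r : ℝ =>
        (Real.Gamma r)⁻¹ * ∫ u in Ioc (0 : ℝ) x, Real.rpow (x - u) (r - 1) * f u)
      (nhdsWithin 0 (Ioi 0)) (nhds (f x)) := by
  obtain ⟨M, hM⟩ : ∃ M : ℝ, ∀ y ∈ Icc (0:ℝ) x, ‖f y‖ ≤ M :=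
    isCompact_Icc.exists_bound_of_continuousOn hf.continuousOn
  have hM0 : 0 ≤ M := le_trans (norm_nonneg _) (hM 0 ⟨le_refl _, hx.le⟩)
  set J : ℝ → ℝ → ℝ := fun r s =>
    (Ioc (0:ℝ) (x ^ r)).indicator (fun s => f (x - s ^ (1/r))) s with hJ
  -- key identity for r ∈ (0,1)
  have key : ∀ r ∈ Ioo (0:ℝ) 1,
      (Real.Gamma r)⁻¹ * ∫ u in Ioc (0 : ℝ) x, Real.rpow (x - u) (r - 1) * f u
        = (Real.Gamma (r+1))⁻¹ * ∫ s in Ioi (0:ℝ), J r s := by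
    intro r hr
    obtain ⟨hr0, hr1⟩ := hr
    have hrne : r ≠ 0 := hr0.ne'
    -- step (a): reflection u ↦ x - u
    have stepa : (∫ u in Ioc (0 : ℝ) x, Real.rpow (x - u) (r - 1) * f u)
        = ∫ t in Ioc (0:ℝ) x, t ^ (r-1) * f (x - t) := by
      rw [← intervalIntegral.integral_of_le hx.le, ← intervalIntegral.integral_of_le hx.le]
      have h := intervalIntegral.integral_comp_sub_left (a := 0) (b := x)
        (fun t => t ^ (r-1) * f (x - t)) x
      simp only [sub_zero, sub_self] at h
      rw [← h]
      refine intervalIntegral.integral_congr fun u _ => ?_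
      simp [Real.rpow_eq_pow, sub_sub_cancel]
    -- step (b): as an integral over Ioi 0
    have stepb : (∫ t in Ioc (0:ℝ) x, t ^ (r-1) * f (x - t))
        = ∫ t in Ioi (0:ℝ), (Ioc (0:ℝ) x).indicator (fun t => t ^ (r-1) * f (x - t)) t := by
      rw [setIntegral_indicator measurableSet_Ioc,
        Set.inter_eq_right.mpr Ioc_subset_Ioi_self]
    -- step (c): substitution t = s ^ (1/r)
    have stepc : (∫ t in Ioi (0:ℝ), (Ioc (0:ℝ) x).indicator (fun t => t ^ (r-1) * f (x - t)) t)
        = ∫ s in Ioi (0:ℝ), r⁻¹ * J r s := by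
      rw [← integral_comp_rpow_Ioi ((Ioc (0:ℝ) x).indicator (fun t => t ^ (r-1) * f (x - t)))
        (one_div_ne_zero hrne)]
      refine setIntegral_congr_fun measurableSet_Ioi fun s hs => ?_
      have hs0 : (0:ℝ) < s := hs
      have hmem : s ^ (1/r) ∈ Ioc (0:ℝ) x ↔ s ∈ Ioc (0:ℝ) (x ^ r) := by
        constructor
        · rintro ⟨_, h2⟩
          refine ⟨hs0, ?_⟩
          have h3 := Real.rpow_le_rpow (Real.rpow_nonneg hs0.le _) h2 hr0.le
          rwa [← Real.rpow_mul hs0.le, one_div_mul_cancel hrne, Real.rpow_one] at h3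
        · rintro ⟨_, h2⟩
          refine ⟨Real.rpow_pos_of_pos hs0 _, ?_⟩
          have h3 := Real.rpow_le_rpow hs0.le h2 (one_div_pos.mpr hr0).le
          rwa [← Real.rpow_mul hx.le, mul_one_div, div_self hrne, Real.rpow_one] at h3
      by_cases h : s ∈ Ioc (0:ℝ) (x ^ r)
      · rw [hJ]
        simp only []
        rw [Set.indicator_of_mem (hmem.mpr h), Set.indicator_of_mem h, smul_eq_mul,
          ← Real.rpow_mul hs0.le, abs_of_pos (one_div_pos.mpr hr0), one_div]
        have hone : s ^ (r⁻¹ - 1) * s ^ (r⁻¹ * (r-1)) = 1 := by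
          rw [← Real.rpow_add hs0, show (r⁻¹ - 1) + r⁻¹ * (r-1) = 0 by field_simp; ring,
            Real.rpow_zero]
        calc r⁻¹ * s ^ (r⁻¹ - 1) * (s ^ (r⁻¹ * (r-1)) * f (x - s ^ r⁻¹))
            = r⁻¹ * ((s ^ (r⁻¹ - 1) * s ^ (r⁻¹ * (r-1))) * f (x - s ^ r⁻¹)) := by ring
          _ = r⁻¹ * f (x - s ^ r⁻¹) := by rw [hone, one_mul]
      · rw [hJ]
        simp only []
        rw [Set.indicator_of_notMem (fun hc => h (hmem.mp hc)), Set.indicator_of_notMem h,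
          smul_zero, mul_zero]
    rw [stepa, stepb, stepc, integral_const_mul, Real.Gamma_add_one hrne, mul_inv]
    ring
  -- limit of the Gamma factor
  have hGamma : Tendsto (fun r : ℝ => (Real.Gamma (r+1))⁻¹) (𝓝[>] (0:ℝ)) (𝓝 1) := by
    have h1 : ContinuousAt Real.Gamma 1 := by
      refine (Real.differentiableAt_Gamma fun m => ?_).continuousAt
      have : -(m:ℝ) ≤ 0 := neg_nonpos.mpr (Nat.cast_nonneg m)
      intro hc; rw [← hc] at this; linarith
    have h2 : ContinuousAt (fun r : ℝ => (Real.Gamma (r+1))⁻¹) 0 := by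
      have h3 : ContinuousAt (fun r : ℝ => Real.Gamma (r+1)) 0 := by
        have h0 : ContinuousAt Real.Gamma ((fun r : ℝ => r + 1) 0) := by simpa using h1
        exact ContinuousAt.comp (f := fun r : ℝ => r + 1) (x := (0:ℝ)) h0
          ((continuous_add_right (1:ℝ)).continuousAt)
      refine h3.inv₀ ?_
      simp [Real.Gamma_one]
    have h4 := h2.tendsto
    simp only [zero_add, Real.Gamma_one, inv_one] at h4
    exact h4.mono_left nhdsWithin_le_nhds
  -- limit of the integral, by dominated convergence
  have hInt : Tendsto (fun r => ∫ s in Ioi (0:ℝ), J r s) (𝓝[>] (0:ℝ)) (𝓝 (f x)) := by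
    set g : ℝ → ℝ := (Ioc (0:ℝ) 1).indicator (fun _ => f x) with hg
    have hgint : (∫ s in Ioi (0:ℝ), g s) = f x := by
      rw [hg, setIntegral_indicator measurableSet_Ioc,
        Set.inter_eq_right.mpr Ioc_subset_Ioi_self, setIntegral_const]
      simp
    have hbound : Integrable ((Ioc (0:ℝ) (max x 1)).indicator (fun _ => M))
        (volume.restrict (Ioi (0:ℝ))) := by
      rw [integrable_indicator_iff measurableSet_Ioc]
      refine (integrableOn_const_iff).mpr (Or.inr ?_)
      exact lt_of_le_of_lt (Measure.restrict_apply_le _ _) measure_Ioc_lt_top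
    have hxr : Tendsto (fun r : ℝ => x ^ r) (𝓝[>] (0:ℝ)) (𝓝 1) := by
      have := (Real.continuousAt_const_rpow (a := x) (b := 0) hx.ne').tendsto
      simpa using this.mono_left nhdsWithin_le_nhds
    have h1r : Tendsto (fun r : ℝ => 1/r) (𝓝[>] (0:ℝ)) atTop := by
      simpa [one_div] using tendsto_inv_nhdsGT_zero
    rw [← hgint]
    refine tendsto_integral_filter_of_dominated_convergence
      ((Ioc (0:ℝ) (max x 1)).indicator (fun _ => M)) ?_ ?_ hbound ?_
    · refine Eventually.of_forall fun r => ?_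
      refine (Measurable.indicator ?_ measurableSet_Ioc).aestronglyMeasurable
      exact hf.measurable.comp (measurable_const.sub (measurable_id.pow_const _))
    · filter_upwards [Ioo_mem_nhdsGT (zero_lt_one)] with r hr
      refine Eventually.of_forall fun s => ?_
      by_cases h : s ∈ Ioc (0:ℝ) (x ^ r)
      · rw [hJ]; simp only []
        rw [Set.indicator_of_mem h]
        have hsx : s ^ (1/r) ≤ x := by
          have h3 := Real.rpow_le_rpow (le_of_lt h.1) h.2 (one_div_pos.mpr hr.1).le
          rwa [← Real.rpow_mul hx.le, mul_one_div, div_self hr.1.ne', Real.rpow_one] at h3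
        have harg : x - s ^ (1/r) ∈ Icc (0:ℝ) x :=
          ⟨by linarith, by have := Real.rpow_nonneg h.1.le (1/r); linarith⟩
        have hsC : s ∈ Ioc (0:ℝ) (max x 1) := by
          refine ⟨h.1, le_trans h.2 ?_⟩
          rcases le_total 1 x with hx1 | hx1
          · exact le_trans (by
              calc x ^ r ≤ x ^ (1:ℝ) := Real.rpow_le_rpow_of_exponent_le hx1 hr.2.le
                _ = x := Real.rpow_one x) (le_max_left _ _)
          · exact le_trans (Real.rpow_le_one hx.le hx1 hr.1.le) (le_max_right _ _)
        rw [Set.indicator_of_mem hsC]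
        exact hM _ harg
      · rw [hJ]; simp only []
        rw [Set.indicator_of_notMem h, norm_zero]
        exact Set.indicator_nonneg (fun _ _ => hM0) s
    · have h1ne : ∀ᵐ s : ℝ, s ≠ 1 := by
        rw [ae_iff]
        have : {s : ℝ | ¬ s ≠ 1} = {1} := by ext s; simp
        rw [this]
        exact Real.volume_singleton
      filter_upwards [ae_restrict_mem measurableSet_Ioi, ae_restrict_of_ae h1ne]
        with s hs0 hs1
      have hs0' : (0:ℝ) < s := hs0
      rcases lt_or_gt_of_ne hs1 with hlt | hgt
      · -- s < 1 : J r s is eventually f (x - s^(1/r)) → f x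
        have hev : ∀ᶠ r in 𝓝[>] (0:ℝ), s < x ^ r :=
          hxr.eventually (eventually_gt_nhds hlt)
        have hlim : Tendsto (fun r : ℝ => f (x - s ^ (1/r))) (𝓝[>] (0:ℝ)) (𝓝 (f x)) := by
          have hs0'' : Tendsto (fun r : ℝ => s ^ (1/r)) (𝓝[>] (0:ℝ)) (𝓝 0) :=
            (tendsto_rpow_atTop_of_base_lt_one s (by linarith) hlt).comp h1r
          have : Tendsto (fun r : ℝ => x - s ^ (1/r)) (𝓝[>] (0:ℝ)) (𝓝 x) := by
            simpa using tendsto_const_nhds.sub hs0''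
          exact (hf.continuousAt.tendsto).comp this
        have : g s = f x := by
          have hmem1 : s ∈ Ioc (0:ℝ) 1 := ⟨hs0', hlt.le⟩
          rw [hg]; exact Set.indicator_of_mem hmem1 (fun _ => f x)
        rw [this]
        refine hlim.congr' ?_
        filter_upwards [hev] with r hr
        have hmem' : s ∈ Ioc (0:ℝ) (x ^ r) := ⟨hs0', hr.le⟩
        simp only [hJ]
        exact (Set.indicator_of_mem hmem' (fun t => f (x - t ^ (1/r)))).symm
      · -- s > 1 : J r s is eventually 0
        have hev : ∀ᶠ r in 𝓝[>] (0:ℝ), x ^ r < s :=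
          hxr.eventually (eventually_lt_nhds hgt)
        have : g s = 0 := by
          have hmem1 : s ∉ Ioc (0:ℝ) 1 := fun hc => absurd hc.2 (not_le.mpr hgt)
          rw [hg]; exact Set.indicator_of_notMem hmem1 (fun _ => f x)
        rw [this]
        refine tendsto_const_nhds.congr' ?_
        filter_upwards [hev] with r hr
        have hmem' : s ∉ Ioc (0:ℝ) (x ^ r) := fun hc => absurd hc.2 (not_le.mpr hr)
        simp only [hJ]
        exact (Set.indicator_of_notMem hmem' (fun t => f (x - t ^ (1/r)))).symm
  have hmul := hGamma.mul hInt
  rw [one_mul] at hmul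
  refine hmul.congr' ?_
  filter_upwards [Ioo_mem_nhdsGT (zero_lt_one)] with r hr
  exact (key r hr).symm
end

section
/- Let σ > 0, σ ≠ 1, μ ∈ ℝ, and define N_p β_p = ∫_{−∞}^∞ e^{−σ^{−2}x² + 2μσ^{−2}x} H_p(x) dx. Then the sequence b_p := N_p β_p satisfies the three-term recurrence b_p = 2μ b_{p−1} + 2(p−1)(σ² − 1) b_{p−2} for all p ≥ 2, and b_1 = 2μ b_0. -/
open MeasureTheory Polynomial Real

/-- The physicists' Hermite polynomials: `H_0 = 1`, `H_1 = 2X`,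
`H_{n+2} = 2X H_{n+1} - 2(n+1) H_n`. -/
noncomputable def physHermite : ℕ → Polynomial ℝ
  | 0 => 1
  | 1 => Polynomial.C 2 * Polynomial.X
  | n + 2 => Polynomial.C 2 * Polynomial.X * physHermite (n + 1)
      - Polynomial.C ((2 * (n + 1) : ℕ) : ℝ) * physHermite n

lemma physHermite_succ (n : ℕ) : physHermite (n + 2)
    = Polynomial.C 2 * Polynomial.X * physHermite (n + 1)
      - Polynomial.C ((2 * (n + 1) : ℕ) : ℝ) * physHermite n := rfl

lemma deriv_physHermite (n : ℕ) :
    derivative (physHermite (n + 1)) = C (2 * ((n : ℝ) + 1)) * physHermite n := by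
  induction n using Nat.twoStepInduction with
  | zero =>
    show derivative (C 2 * X) = _
    simp [show physHermite 0 = 1 from rfl]
  | one =>
    show derivative (physHermite 2) = _
    rw [physHermite_succ]
    show derivative (C 2 * X * (C 2 * X) - _ * (1 : Polynomial ℝ)) = C (2 * ((1:ℕ) + 1 : ℝ)) * (C 2 * X)
    rw [derivative_sub, derivative_mul, derivative_mul, derivative_mul]
    simp only [derivative_C, derivative_X, derivative_one]
    push_cast
    simp only [map_mul, map_add, map_ofNat, map_one]
    ring
  | more n ih0 ih1 =>
    rw [show n + 2 + 1 = (n + 1) + 2 from rfl, physHermite_succ (n + 1),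
      derivative_sub, derivative_mul, derivative_mul, derivative_mul,
      derivative_C, derivative_C, derivative_X, ih1, ih0,
      show n + 1 + 1 = n + 2 from rfl, physHermite_succ n]
    push_cast
    simp only [map_mul, map_add, map_ofNat, map_one]
    ring

lemma tendsto_poly_gauss {c : ℝ} (hc : 0 < c) (P : Polynomial ℝ) :
    Filter.Tendsto (fun x : ℝ => P.eval x * Real.exp (-c * x ^ 2))
      (Filter.cocompact ℝ) (nhds 0) := by
  induction P using Polynomial.induction_on' with
  | add p q hp hq => simpa [add_mul] using hp.add hq
  | monomial n t =>
    have hlim : Filter.Tendsto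
        (fun x : ℝ => |t| * (|x| ^ (n : ℝ) * Real.exp (-c * x ^ 2)))
        (Filter.cocompact ℝ) (nhds 0) := by
      simpa using
        ((tendsto_rpow_abs_mul_exp_neg_mul_sq_cocompact hc (n : ℝ)).const_mul |t|)
    refine squeeze_zero_norm (fun x => ?_) hlim
    rw [Real.rpow_natCast]
    simp [abs_mul, abs_pow, Real.abs_exp, mul_assoc]

lemma integrable_gauss_poly (a b : ℝ) (ha : 0 < a) (P : Polynomial ℝ) :
    Integrable fun x : ℝ => Real.exp (-a * x ^ 2 + b * x) * P.eval x := by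
  have h2 : (0 : ℝ) < a / 2 := by linarith
  have h4 : (0 : ℝ) < a / 4 := by linarith
  set g : ℝ → ℝ := fun x => P.eval x * Real.exp (-(a / 2) * x ^ 2 + b * x) with hg
  have hgc : Continuous g :=
    P.continuous.mul (Real.continuous_exp.comp (by continuity))
  have hg0 : Filter.Tendsto g (Filter.cocompact ℝ) (nhds 0) := by
    have hlim : Filter.Tendsto
        (fun x : ℝ => ‖P.eval x * Real.exp (-(a / 4) * x ^ 2)‖ * Real.exp (b ^ 2 / a))
        (Filter.cocompact ℝ) (nhds 0) := by
      simpa using (tendsto_poly_gauss h4 P).norm.mul_const (Real.exp (b ^ 2 / a))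
    refine squeeze_zero_norm (fun x => ?_) hlim
    have hle : -(a / 2) * x ^ 2 + b * x ≤ -(a / 4) * x ^ 2 + b ^ 2 / a := by
      have h' : b * x - (a / 4) * x ^ 2 ≤ b ^ 2 / a := by
        rw [le_div_iff₀ ha]
        nlinarith [sq_nonneg ((a / 2) * x - b)]
      linarith
    calc ‖g x‖ = ‖P.eval x‖ * Real.exp (-(a / 2) * x ^ 2 + b * x) := by
            simp [hg, abs_mul, Real.abs_exp]
      _ ≤ ‖P.eval x‖ * (Real.exp (-(a / 4) * x ^ 2) * Real.exp (b ^ 2 / a)) := by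
            rw [← Real.exp_add]
            exact mul_le_mul_of_nonneg_left (Real.exp_le_exp.2 (by linarith)) (norm_nonneg _)
      _ = ‖P.eval x * Real.exp (-(a / 4) * x ^ 2)‖ * Real.exp (b ^ 2 / a) := by
            simp [abs_mul, Real.abs_exp, mul_assoc]
  obtain ⟨C, hC⟩ : ∃ C, ∀ x, ‖g x‖ ≤ C := by
    obtain ⟨C, hC⟩ := isBounded_iff_forall_norm_le.1
      (hg0.isCompact_insert_range_of_cocompact hgc).isBounded
    exact ⟨C, fun x => hC _ (Set.mem_insert_of_mem _ ⟨x, rfl⟩)⟩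
  apply Integrable.mono' ((integrable_exp_neg_mul_sq h2).const_mul C)
  · exact ((Real.continuous_exp.comp (by continuity)).mul P.continuous).aestronglyMeasurable
  · filter_upwards with x
    have hsplit : Real.exp (-a * x ^ 2 + b * x)
        = Real.exp (-(a / 2) * x ^ 2 + b * x) * Real.exp (-(a / 2) * x ^ 2) := by
      rw [← Real.exp_add]; ring_nf
    calc ‖Real.exp (-a * x ^ 2 + b * x) * P.eval x‖
        = ‖g x‖ * Real.exp (-(a / 2) * x ^ 2) := by
          rw [hsplit]; simp [hg, abs_mul, Real.abs_exp]; ring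
      _ ≤ C * Real.exp (-(a / 2) * x ^ 2) :=
          mul_le_mul_of_nonneg_right (hC x) (Real.exp_nonneg _)

lemma gauss_poly_parts (a b : ℝ) (ha : 0 < a) (P : Polynomial ℝ) :
    ∫ x : ℝ, Real.exp (-a * x ^ 2 + b * x)
      * (((C b - C (2 * a) * X) * P + derivative P).eval x) = 0 := by
  apply integral_eq_zero_of_hasDerivAt_of_integrable
    (f := fun x : ℝ => Real.exp (-a * x ^ 2 + b * x) * P.eval x)
  · intro x
    have h1 : HasDerivAt (fun x : ℝ => -a * x ^ 2 + b * x) (-a * (2 * x) + b) x := by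
      have := ((hasDerivAt_pow 2 x).const_mul (-a)).add ((hasDerivAt_id x).const_mul b)
      exact this.congr_deriv (by rw [show (2:ℕ)-1 = 1 from rfl]; push_cast; ring)
    have h2 := (h1.exp).mul (P.hasDerivAt x)
    refine h2.congr_deriv ?_
    simp only [eval_add, eval_mul, eval_sub, eval_C, eval_X]
    ring
  · exact integrable_gauss_poly a b ha _
  · exact integrable_gauss_poly a b ha P

/-- Integration-by-parts identity. -/
lemma gauss_poly_step (a b : ℝ) (ha : 0 < a) (P : Polynomial ℝ) :
    (2 * a) * ∫ x : ℝ, Real.exp (-a * x ^ 2 + b * x) * (x * P.eval x)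
      = b * (∫ x : ℝ, Real.exp (-a * x ^ 2 + b * x) * P.eval x)
        + ∫ x : ℝ, Real.exp (-a * x ^ 2 + b * x) * (derivative P).eval x := by
  have h := gauss_poly_parts a b ha P
  have I1 : Integrable fun x : ℝ =>
      Real.exp (-a * x ^ 2 + b * x) * (x * P.eval x) :=
    (integrable_gauss_poly a b ha (X * P)).congr
      (Filter.Eventually.of_forall fun x => by simp)
  have I2 := integrable_gauss_poly a b ha P
  have I3 := integrable_gauss_poly a b ha (derivative P)
  have hfun : (fun x : ℝ => Real.exp (-a * x ^ 2 + b * x)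
      * (((C b - C (2 * a) * X) * P + derivative P).eval x))
    = fun x : ℝ => (b * (Real.exp (-a * x ^ 2 + b * x) * P.eval x)
        - (2 * a) * (Real.exp (-a * x ^ 2 + b * x) * (x * P.eval x)))
        + Real.exp (-a * x ^ 2 + b * x) * (derivative P).eval x := by
    funext x
    simp only [eval_add, eval_mul, eval_sub, eval_C, eval_X]
    ring
  rw [hfun] at h
  have I12 : Integrable fun x : ℝ =>
      b * (Real.exp (-a * x ^ 2 + b * x) * P.eval x)
        - (2 * a) * (Real.exp (-a * x ^ 2 + b * x) * (x * P.eval x)) :=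
    (I2.const_mul b).sub (I1.const_mul (2 * a))
  rw [integral_add I12 I3,
    integral_sub (I2.const_mul b) (I1.const_mul (2 * a)),
    integral_const_mul, integral_const_mul] at h
  linarith

/-- The sequence `b_p = ∫ e^{-x²/σ² + 2μx/σ²} H_p(x) dx` satisfies the three-term
recurrence `b_p = 2μ b_{p-1} + 2(p-1)(σ²-1) b_{p-2}` for `p ≥ 2`, and `b_1 = 2μ b_0`. -/
theorem beta_three_term_recurrence
    (σ μ : ℝ) (hσ0 : 0 < σ) (hσ1 : σ ≠ 1) :
    (∀ p : ℕ, 2 ≤ p →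
      (∫ x : ℝ, Real.exp (-(σ ^ 2)⁻¹ * x ^ 2 + 2 * μ * (σ ^ 2)⁻¹ * x) *
          (physHermite p).eval x)
        = 2 * μ * (∫ x : ℝ, Real.exp (-(σ ^ 2)⁻¹ * x ^ 2 + 2 * μ * (σ ^ 2)⁻¹ * x) *
            (physHermite (p - 1)).eval x)
          + 2 * ((p : ℝ) - 1) * (σ ^ 2 - 1) *
            (∫ x : ℝ, Real.exp (-(σ ^ 2)⁻¹ * x ^ 2 + 2 * μ * (σ ^ 2)⁻¹ * x) *
              (physHermite (p - 2)).eval x))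
    ∧
    (∫ x : ℝ, Real.exp (-(σ ^ 2)⁻¹ * x ^ 2 + 2 * μ * (σ ^ 2)⁻¹ * x) *
        (physHermite 1).eval x)
      = 2 * μ * ∫ x : ℝ, Real.exp (-(σ ^ 2)⁻¹ * x ^ 2 + 2 * μ * (σ ^ 2)⁻¹ * x) *
          (physHermite 0).eval x := by
  have hσ : σ ≠ 0 := ne_of_gt hσ0
  have ha : 0 < (σ ^ 2)⁻¹ := by positivity
  set a : ℝ := (σ ^ 2)⁻¹ with ha_def
  set b : ℝ := 2 * μ * a with hb_def
  constructor
  · intro p hp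
    obtain ⟨n, rfl⟩ : ∃ n, p = n + 2 := ⟨p - 2, by omega⟩
    have hm1 : n + 2 - 1 = n + 1 := by omega
    have hm2 : n + 2 - 2 = n := by omega
    rw [hm1, hm2]
    have hexp : (fun x : ℝ => Real.exp (-a * x ^ 2 + b * x) * (physHermite (n + 2)).eval x)
        = fun x : ℝ => 2 * (Real.exp (-a * x ^ 2 + b * x) * (x * (physHermite (n + 1)).eval x))
            - (2 * ((n : ℝ) + 1))
              * (Real.exp (-a * x ^ 2 + b * x) * (physHermite n).eval x) := by
      funext x
      rw [physHermite_succ]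
      simp only [eval_sub, eval_mul, eval_C, eval_X]
      push_cast
      ring
    have IxH : Integrable fun x : ℝ =>
        Real.exp (-a * x ^ 2 + b * x) * (x * (physHermite (n + 1)).eval x) :=
      (integrable_gauss_poly a b ha (X * physHermite (n + 1))).congr
        (Filter.Eventually.of_forall fun x => by simp)
    have IH0 : Integrable fun x : ℝ =>
        Real.exp (-a * x ^ 2 + b * x) * (physHermite n).eval x :=
      integrable_gauss_poly a b ha _
    rw [hexp, integral_sub (IxH.const_mul 2) (IH0.const_mul _),
      integral_const_mul, integral_const_mul]
    have hstep := gauss_poly_step a b ha (physHermite (n + 1))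
    rw [deriv_physHermite] at hstep
    have hder : (∫ x : ℝ, Real.exp (-a * x ^ 2 + b * x)
          * ((C (2 * ((n : ℝ) + 1)) * physHermite n).eval x))
        = (2 * ((n : ℝ) + 1))
            * ∫ x : ℝ, Real.exp (-a * x ^ 2 + b * x) * (physHermite n).eval x := by
      rw [← integral_const_mul]
      congr 1
      funext x
      simp only [eval_mul, eval_C]
      ring
    rw [hder] at hstep
    set T : ℝ := ∫ x : ℝ, Real.exp (-a * x ^ 2 + b * x)
        * (x * (physHermite (n + 1)).eval x) with hT
    set B1 : ℝ := ∫ x : ℝ, Real.exp (-a * x ^ 2 + b * x)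
        * (physHermite (n + 1)).eval x with hB1
    set B0 : ℝ := ∫ x : ℝ, Real.exp (-a * x ^ 2 + b * x)
        * (physHermite n).eval x with hB0
    have hkey : σ ^ 2 * a = 1 := by
      rw [ha_def]; field_simp
    rw [hb_def] at hstep
    push_cast
    linear_combination σ ^ 2 * hstep + (2 * μ * B1 - 2 * T) * hkey
  · have hstep := gauss_poly_step a b ha 1
    simp only [derivative_one, eval_zero, eval_one, mul_one, mul_zero,
      integral_zero, add_zero] at hstep
    have h1 : (∫ x : ℝ, Real.exp (-a * x ^ 2 + b * x) * (physHermite 1).eval x)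
        = 2 * ∫ x : ℝ, Real.exp (-a * x ^ 2 + b * x) * x := by
      rw [← integral_const_mul]
      congr 1
      funext x
      show Real.exp (-a * x ^ 2 + b * x) * ((C 2 * X : Polynomial ℝ)).eval x = _
      simp only [eval_mul, eval_C, eval_X]
      ring
    have h0 : (∫ x : ℝ, Real.exp (-a * x ^ 2 + b * x) * (physHermite 0).eval x)
        = ∫ x : ℝ, Real.exp (-a * x ^ 2 + b * x) := by
      congr 1
      funext x
      show Real.exp (-a * x ^ 2 + b * x) * (1 : Polynomial ℝ).eval x = _
      simp
    rw [h1, h0]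
    have hkey : σ ^ 2 * a = 1 := by
      rw [ha_def]; field_simp
    rw [hb_def] at hstep
    set Tx : ℝ := ∫ x : ℝ, Real.exp (-a * x ^ 2 + b * x) * x with hTx
    set B : ℝ := ∫ x : ℝ, Real.exp (-a * x ^ 2 + b * x) with hBB
    linear_combination σ ^ 2 * hstep + (2 * μ * B - 2 * Tx) * hkey
end

section
/- Let σ > 0 and define N_p α_p = ∫_{−∞}^∞ dx e^{−σ^{−2}x²} H_p(x) ∫_0^x du e^{(−1+σ^{−2})u²} (i.e. the μ = 0 case). Then N_{2p} α_{2p} = 0 for all p ≥ 0, and N_{2p+1} α_{2p+1} = √π 2^{2p} p! σ² (σ² − 1)^p for all p ≥ 0. -/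
open MeasureTheory Polynomial Real

lemma physHermite_eval_neg (n : ℕ) (x : ℝ) :
    (physHermite n).eval (-x) = (-1) ^ n * (physHermite n).eval x := by
  induction n using Nat.twoStepInduction generalizing x with
  | zero => simp [physHermite]
  | one => simp [physHermite]
  | more n ih1 ih2 =>
    simp only [physHermite, eval_sub, eval_mul, eval_C, eval_X, ih1, ih2]
    push_cast
    ring

lemma physHermite_derivative (n : ℕ) :
    Polynomial.derivative (physHermite (n + 1)) = C ((2 * (n + 1) : ℝ)) * physHermite n := by
  induction n using Nat.twoStepInduction with
  | zero => simp [physHermite]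
  | one =>
    apply Polynomial.funext
    intro x
    simp [physHermite]
    ring
  | more n ih1 ih2 =>
    show Polynomial.derivative (physHermite (n + 3)) = _
    have h3 : physHermite (n + 3) = Polynomial.C 2 * Polynomial.X * physHermite (n + 2)
      - Polynomial.C ((2 * (n + 2) : ℕ) : ℝ) * physHermite (n + 1) := rfl
    have h2 : physHermite (n + 2) = Polynomial.C 2 * Polynomial.X * physHermite (n + 1)
      - Polynomial.C ((2 * (n + 1) : ℕ) : ℝ) * physHermite n := rfl
    have ih2' : Polynomial.derivative (physHermite (n + 2)) =
        C ((2 * ((n:ℝ) + 1) + 2 : ℝ)) * physHermite (n + 1) := by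
      rw [show n + 2 = n + 1 + 1 from rfl, ih2]; push_cast; ring_nf
    rw [h3, derivative_sub, derivative_mul, derivative_mul, derivative_mul, derivative_C,
      derivative_C, derivative_X, ih1, ih2', h2]
    apply Polynomial.funext
    intro x
    simp only [eval_add, eval_sub, eval_mul, eval_C, eval_X, eval_pow, eval_one, eval_neg,
      eval_zero]
    push_cast
    ring

lemma physHermite_succ_eq (n : ℕ) :
    physHermite (n + 1) = C 2 * X * physHermite n - Polynomial.derivative (physHermite n) := by
  cases n with
  | zero => simp [physHermite]
  | succ m =>
    rw [physHermite_derivative]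
    show Polynomial.C 2 * Polynomial.X * physHermite (m + 1)
      - Polynomial.C ((2 * (m + 1) : ℕ) : ℝ) * physHermite m = _
    push_cast
    ring

lemma integrable_pow_gauss {a : ℝ} (ha : 0 < a) (n : ℕ) :
    Integrable fun x : ℝ => x ^ n * Real.exp (-a * x ^ 2) := by
  have h := integrable_rpow_mul_exp_neg_mul_sq ha (s := n)
    (lt_of_lt_of_le neg_one_lt_zero (Nat.cast_nonneg n))
  simpa [Real.rpow_natCast] using h

lemma integrable_poly_gauss {a : ℝ} (ha : 0 < a) (P : Polynomial ℝ) :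
    Integrable fun x : ℝ => P.eval x * Real.exp (-a * x ^ 2) := by
  have : (fun x : ℝ => P.eval x * Real.exp (-a * x ^ 2)) =
      fun x => ∑ i ∈ Finset.range (P.natDegree + 1),
        P.coeff i * (x ^ i * Real.exp (-a * x ^ 2)) := by
    funext x
    rw [Polynomial.eval_eq_sum_range, Finset.sum_mul]
    simp [mul_assoc]
  rw [this]
  exact integrable_finset_sum _ fun i _ => (integrable_pow_gauss ha i).const_mul _

noncomputable def Fint (c : ℝ) (x : ℝ) : ℝ := ∫ u in (0:ℝ)..x, Real.exp (c * u ^ 2)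

lemma continuous_gauss_c (c : ℝ) : Continuous fun u : ℝ => Real.exp (c * u ^ 2) := by
  continuity

lemma hasDerivAt_Fint (c : ℝ) (x : ℝ) : HasDerivAt (Fint c) (Real.exp (c * x ^ 2)) x := by
  exact intervalIntegral.integral_hasDerivAt_right
    ((continuous_gauss_c c).intervalIntegrable 0 x)
    ((continuous_gauss_c c).stronglyMeasurableAtFilter _ _)
    (continuous_gauss_c c).continuousAt

lemma continuous_Fint (c : ℝ) : Continuous (Fint c) := by
  have : Differentiable ℝ (Fint c) := fun x => (hasDerivAt_Fint c x).differentiableAt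
  exact this.continuous

lemma abs_Fint_le (c : ℝ) (x : ℝ) : |Fint c x| ≤ |x| * Real.exp (max c 0 * x ^ 2) := by
  have h : ∀ u ∈ Set.uIoc (0:ℝ) x, ‖Real.exp (c * u ^ 2)‖ ≤ Real.exp (max c 0 * x ^ 2) := by
    intro u hu
    rw [Real.norm_eq_abs, abs_of_nonneg (exp_pos _).le, exp_le_exp]
    have hu2 : u ^ 2 ≤ x ^ 2 := by
      rcases Set.mem_uIoc.mp hu with ⟨h1, h2⟩ | ⟨h1, h2⟩
      · nlinarith
      · nlinarith
    calc c * u ^ 2 ≤ max c 0 * u ^ 2 := by nlinarith [le_max_left c 0, sq_nonneg u]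
      _ ≤ max c 0 * x ^ 2 := by nlinarith [le_max_right c 0]
  have := intervalIntegral.norm_integral_le_of_norm_le_const h
  simpa [Fint, Real.norm_eq_abs, mul_comm] using this

lemma integrable_poly_gauss_Fint {b c : ℝ} (hb : 0 < b) (hcb : max c 0 < b)
    (P : Polynomial ℝ) :
    Integrable fun x : ℝ => P.eval x * Real.exp (-b * x ^ 2) * Fint c x := by
  have hd : (0:ℝ) < b - max c 0 := by linarith
  apply Integrable.mono (integrable_poly_gauss hd (P * Polynomial.X))
  · exact ((P.continuous_aeval.mul (continuous_exp.comp (by continuity))).mul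
      (continuous_Fint c)).aestronglyMeasurable
  · filter_upwards with x
    rw [Real.norm_eq_abs, Real.norm_eq_abs, abs_mul, abs_mul]
    rw [Polynomial.eval_mul, Polynomial.eval_X, abs_mul, abs_of_nonneg (exp_pos _).le,
      abs_of_nonneg (exp_pos _).le]
    calc |P.eval x| * Real.exp (-b * x ^ 2) * |Fint c x|
        ≤ |P.eval x| * Real.exp (-b * x ^ 2) * (|x| * Real.exp (max c 0 * x ^ 2)) := by
          gcongr
          exacts [abs_Fint_le c x]
      _ = |P.eval x| * |x| * (Real.exp (-b * x ^ 2) * Real.exp (max c 0 * x ^ 2)) := by ring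
      _ = |P.eval x| * |x| * Real.exp (-(b - max c 0) * x ^ 2) := by
          rw [← Real.exp_add]; ring_nf
      _ = |P.eval x * x| * Real.exp (-(b - max c 0) * x ^ 2) := by rw [abs_mul]

lemma Fint_neg_arg (c x : ℝ) : Fint c (-x) = -Fint c x := by
  have h := intervalIntegral.integral_comp_neg (a := (0:ℝ)) (b := x)
    (fun u => Real.exp (c * u ^ 2))
  simp only [neg_sq, neg_zero] at h
  show (∫ u in (0:ℝ)..(-x), Real.exp (c * u ^ 2)) = -∫ u in (0:ℝ)..x, Real.exp (c * u ^ 2)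
  rw [intervalIntegral.integral_symm (-x) 0, ← h]

lemma gauss_hermite_zero (n : ℕ) :
    ∫ x : ℝ, Real.exp (-(1:ℝ) * x ^ 2) * (physHermite (n + 1)).eval x = 0 := by
  have hderiv : ∀ x : ℝ, HasDerivAt
      (fun y => -(Real.exp (-(1:ℝ) * y ^ 2) * (physHermite n).eval y))
      (Real.exp (-(1:ℝ) * x ^ 2) * (physHermite (n + 1)).eval x) x := by
    intro x
    have h1 : HasDerivAt (fun y : ℝ => -(1:ℝ) * y ^ 2) (-(1:ℝ) * (2 * x)) x := by
      simpa using (hasDerivAt_pow 2 x).const_mul (-(1:ℝ))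
    have h2 := (h1.exp.mul ((physHermite n).hasDerivAt x)).neg
    refine h2.congr_deriv (Eq.symm ?_)
    rw [physHermite_succ_eq]
    simp only [Polynomial.eval_sub, Polynomial.eval_mul, Polynomial.eval_C, Polynomial.eval_X]
    ring
  have hint : ∀ m : ℕ, Integrable fun x : ℝ => Real.exp (-(1:ℝ) * x ^ 2) *
      (physHermite m).eval x := by
    intro m
    simpa [mul_comm] using integrable_poly_gauss one_pos (physHermite m)
  exact integral_eq_zero_of_hasDerivAt_of_integrable hderiv (hint (n + 1)) ((hint n).neg)

noncomputable def Jint (σ : ℝ) (n : ℕ) : ℝ :=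
  ∫ x : ℝ, Real.exp (-(σ ^ 2)⁻¹ * x ^ 2) * (physHermite n).eval x *
    Fint (-1 + (σ ^ 2)⁻¹) x

section Rec

variable {b c σ2 : ℝ}

lemma rec_general (hb : 0 < b) (hσ2 : σ2 * b = 1) (hc : c = -1 + b) (n : ℕ) :
    (∫ x : ℝ, Real.exp (-b * x ^ 2) * (physHermite (n + 2)).eval x * Fint c x)
      = 2 * ((n : ℝ) + 1) * (σ2 - 1) *
        ∫ x : ℝ, Real.exp (-b * x ^ 2) * (physHermite n).eval x * Fint c x := by
  have hcb : max c 0 < b := max_lt (by rw [hc]; linarith) hb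
  have hPGF : ∀ Q : Polynomial ℝ, Integrable fun x : ℝ =>
      Q.eval x * Real.exp (-b * x ^ 2) * Fint c x := fun Q => integrable_poly_gauss_Fint hb hcb Q
  have hJ : ∀ Q : Polynomial ℝ, Integrable fun x : ℝ =>
      Real.exp (-b * x ^ 2) * Q.eval x * Fint c x := by
    intro Q
    have h : (fun x : ℝ => Real.exp (-b * x ^ 2) * Q.eval x * Fint c x)
        = fun x => Q.eval x * Real.exp (-b * x ^ 2) * Fint c x := funext fun x => by ring
    rw [h]; exact hPGF Q
  have hexp : ∀ x : ℝ, Real.exp (-b * x ^ 2) * Real.exp (c * x ^ 2)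
      = Real.exp (-(1:ℝ) * x ^ 2) := by
    intro x; rw [← Real.exp_add]; congr 1; rw [hc]; ring
  set u : ℝ → ℝ := fun x => -σ2 * Real.exp (-b * x ^ 2) with hudef
  set u' : ℝ → ℝ := fun x => 2 * x * Real.exp (-b * x ^ 2) with hu'def
  set v : ℝ → ℝ := fun x => (physHermite (n + 1)).eval x * Fint c x with hvdef
  set v' : ℝ → ℝ := fun x => 2 * ((n : ℝ) + 1) * (physHermite n).eval x * Fint c x
      + (physHermite (n + 1)).eval x * Real.exp (c * x ^ 2) with hv'def
  have hu : ∀ x, HasDerivAt u (u' x) x := by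
    intro x
    have h1 : HasDerivAt (fun y : ℝ => -b * y ^ 2) (-b * (2 * x)) x := by
      simpa using (hasDerivAt_pow 2 x).const_mul (-b)
    have h2 := h1.exp.const_mul (-σ2)
    refine h2.congr_deriv (Eq.symm ?_)
    simp only [hu'def]
    linear_combination (-(2 * x * Real.exp (-b * x ^ 2))) * hσ2
  have hv : ∀ x, HasDerivAt v (v' x) x := by
    intro x
    have h := ((physHermite (n + 1)).hasDerivAt x).mul (hasDerivAt_Fint c x)
    rw [physHermite_derivative] at h
    refine h.congr_deriv (Eq.symm ?_)
    simp only [hv'def, Polynomial.eval_mul, Polynomial.eval_C]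
  have huv : Integrable (u * v) := by
    have h : (u * v) = fun x => (-σ2) *
        ((physHermite (n + 1)).eval x * Real.exp (-b * x ^ 2) * Fint c x) :=
      funext fun x => by simp only [Pi.mul_apply, hudef, hvdef]; ring
    rw [h]; exact (hPGF _).const_mul _
  have hu'v : Integrable (u' * v) := by
    have h : (u' * v) = fun x => (Polynomial.C 2 * Polynomial.X * physHermite (n + 1)).eval x *
        Real.exp (-b * x ^ 2) * Fint c x :=
      funext fun x => by
        simp only [Pi.mul_apply, hu'def, hvdef, Polynomial.eval_mul, Polynomial.eval_C,
          Polynomial.eval_X]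
        ring
    rw [h]; exact hPGF _
  have huv' : Integrable (u * v') := by
    have h : (u * v') = (fun x => (-σ2 * (2 * ((n : ℝ) + 1))) *
        ((physHermite n).eval x * Real.exp (-b * x ^ 2) * Fint c x))
        + fun x => (-σ2) * ((physHermite (n + 1)).eval x * Real.exp (-(1:ℝ) * x ^ 2)) := by
      funext x
      simp only [Pi.mul_apply, Pi.add_apply, hudef, hv'def]
      rw [← hexp x]
      ring
    rw [h]
    exact ((hPGF _).const_mul _).add
      (((integrable_poly_gauss one_pos (physHermite (n + 1)))).const_mul _)
  have ibp := MeasureTheory.integral_mul_deriv_eq_deriv_mul_of_integrable (fun x _ => hu x) (fun x _ => hv x) huv' hu'v huv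
  have e1 : (∫ x : ℝ, u' x * v x)
      = (∫ x : ℝ, Real.exp (-b * x ^ 2) * (physHermite (n + 2)).eval x * Fint c x)
        + 2 * ((n : ℝ) + 1) *
          ∫ x : ℝ, Real.exp (-b * x ^ 2) * (physHermite n).eval x * Fint c x := by
    have hpt : ∀ x : ℝ, u' x * v x
        = Real.exp (-b * x ^ 2) * (physHermite (n + 2)).eval x * Fint c x
          + (2 * ((n : ℝ) + 1)) *
            (Real.exp (-b * x ^ 2) * (physHermite n).eval x * Fint c x) := by
      intro x
      have h2 : (physHermite (n + 2)).eval x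
          = 2 * x * (physHermite (n + 1)).eval x - 2 * ((n : ℝ) + 1) * (physHermite n).eval x := by
        show (Polynomial.C 2 * Polynomial.X * physHermite (n + 1)
          - Polynomial.C ((2 * (n + 1) : ℕ) : ℝ) * physHermite n).eval x = _
        simp only [Polynomial.eval_sub, Polynomial.eval_mul, Polynomial.eval_C, Polynomial.eval_X]
        push_cast
        ring
      simp only [hu'def, hvdef, h2]
      ring
    simp only [hpt]
    rw [integral_add (hJ _) ((hJ _).const_mul _), integral_const_mul]
  have e2 : (∫ x : ℝ, u x * v' x) = -(σ2 * (2 * ((n : ℝ) + 1))) *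
      ∫ x : ℝ, Real.exp (-b * x ^ 2) * (physHermite n).eval x * Fint c x := by
    have hpt : ∀ x : ℝ, u x * v' x
        = (-(σ2 * (2 * ((n : ℝ) + 1)))) *
            (Real.exp (-b * x ^ 2) * (physHermite n).eval x * Fint c x)
          + (-σ2) * (Real.exp (-(1:ℝ) * x ^ 2) * (physHermite (n + 1)).eval x) := by
      intro x
      simp only [hudef, hv'def]
      rw [← hexp x]
      ring
    simp only [hpt]
    rw [integral_add ((hJ _).const_mul _) ?_, integral_const_mul, integral_const_mul,
      gauss_hermite_zero n]
    · ring
    · refine (Integrable.const_mul ?_ _)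
      simpa [mul_comm] using integrable_poly_gauss one_pos (physHermite (n + 1))
  rw [e1, e2] at ibp
  linarith [ibp]

lemma base_general (hb : 0 < b) (hσ2 : σ2 * b = 1) (hc : c = -1 + b) :
    (∫ x : ℝ, Real.exp (-b * x ^ 2) * (physHermite 1).eval x * Fint c x)
      = σ2 * Real.sqrt Real.pi := by
  have hcb : max c 0 < b := max_lt (by rw [hc]; linarith) hb
  have hPGF : ∀ Q : Polynomial ℝ, Integrable fun x : ℝ =>
      Q.eval x * Real.exp (-b * x ^ 2) * Fint c x := fun Q => integrable_poly_gauss_Fint hb hcb Q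
  have hexp : ∀ x : ℝ, Real.exp (-b * x ^ 2) * Real.exp (c * x ^ 2)
      = Real.exp (-(1:ℝ) * x ^ 2) := by
    intro x; rw [← Real.exp_add]; congr 1; rw [hc]; ring
  set u : ℝ → ℝ := fun x => -σ2 * Real.exp (-b * x ^ 2) with hudef
  set u' : ℝ → ℝ := fun x => 2 * x * Real.exp (-b * x ^ 2) with hu'def
  have hu : ∀ x, HasDerivAt u (u' x) x := by
    intro x
    have h1 : HasDerivAt (fun y : ℝ => -b * y ^ 2) (-b * (2 * x)) x := by
      simpa using (hasDerivAt_pow 2 x).const_mul (-b)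
    have h2 := h1.exp.const_mul (-σ2)
    refine h2.congr_deriv (Eq.symm ?_)
    simp only [hu'def]
    linear_combination (-(2 * x * Real.exp (-b * x ^ 2))) * hσ2
  have hv : ∀ x, HasDerivAt (Fint c) (Real.exp (c * x ^ 2)) x := hasDerivAt_Fint c
  have huv : Integrable (u * Fint c) := by
    have h : (u * Fint c) = fun x => (-σ2) *
        ((Polynomial.C 1 : Polynomial ℝ).eval x * Real.exp (-b * x ^ 2) * Fint c x) :=
      funext fun x => by simp only [Pi.mul_apply, hudef, Polynomial.eval_C]; ring
    rw [h]; exact (hPGF _).const_mul _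
  have hu'v : Integrable (u' * Fint c) := by
    have h : (u' * Fint c) = fun x => (Polynomial.C 2 * Polynomial.X : Polynomial ℝ).eval x *
        Real.exp (-b * x ^ 2) * Fint c x :=
      funext fun x => by
        simp only [Pi.mul_apply, hu'def, Polynomial.eval_mul, Polynomial.eval_C,
          Polynomial.eval_X]
    rw [h]; exact hPGF _
  have huv' : Integrable (u * fun x => Real.exp (c * x ^ 2)) := by
    have h : (u * fun x => Real.exp (c * x ^ 2)) = fun x : ℝ =>
        (-σ2) * Real.exp (-(1:ℝ) * x ^ 2) := by
      funext x
      simp only [Pi.mul_apply, hudef]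
      rw [← hexp x]
      ring
    rw [h]
    exact (integrable_exp_neg_mul_sq one_pos).const_mul _
  have ibp := MeasureTheory.integral_mul_deriv_eq_deriv_mul_of_integrable (fun x _ => hu x) (fun x _ => hv x) huv' hu'v huv
  have e1 : (∫ x : ℝ, u' x * Fint c x)
      = ∫ x : ℝ, Real.exp (-b * x ^ 2) * (physHermite 1).eval x * Fint c x := by
    congr 1
    funext x
    simp only [hu'def, physHermite, Polynomial.eval_mul, Polynomial.eval_C, Polynomial.eval_X]
    ring
  have e2 : (∫ x : ℝ, u x * Real.exp (c * x ^ 2)) = -(σ2 * Real.sqrt Real.pi) := by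
    have hpt : ∀ x : ℝ, u x * Real.exp (c * x ^ 2) = (-σ2) * Real.exp (-(1:ℝ) * x ^ 2) := by
      intro x
      simp only [hudef]
      rw [← hexp x]
      ring
    simp only [hpt]
    rw [integral_const_mul, integral_gaussian]
    rw [show Real.pi / 1 = Real.pi by ring]
    ring
  rw [e2] at ibp
  rw [← e1]
  linarith [ibp]

end Rec

/-- For `μ = 0` the coefficients
`N_p α_p = ∫ e^{-x²/σ²} H_p(x) (∫_0^x e^{(-1+σ⁻²)u²} du) dx` satisfy
`N_{2p} α_{2p} = 0` and `N_{2p+1} α_{2p+1} = √π 2^{2p} p! σ² (σ²-1)^p`. -/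
theorem alpha_coefficients_mu_zero
    (σ : ℝ) (hσ0 : 0 < σ) (hσ2 : σ ^ 2 < 2) (p : ℕ) :
    (∫ x : ℝ, Real.exp (-(σ ^ 2)⁻¹ * x ^ 2) * (physHermite (2 * p)).eval x *
        ∫ u in (0 : ℝ)..x, Real.exp ((-1 + (σ ^ 2)⁻¹) * u ^ 2)) = 0
    ∧
    (∫ x : ℝ, Real.exp (-(σ ^ 2)⁻¹ * x ^ 2) * (physHermite (2 * p + 1)).eval x *
        ∫ u in (0 : ℝ)..x, Real.exp ((-1 + (σ ^ 2)⁻¹) * u ^ 2))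
      = Real.sqrt Real.pi * 2 ^ (2 * p) * (p.factorial : ℝ) * σ ^ 2 *
          (σ ^ 2 - 1) ^ p := by
  have hb : (0:ℝ) < (σ ^ 2)⁻¹ := by positivity
  have hσs : σ ^ 2 * (σ ^ 2)⁻¹ = 1 := mul_inv_cancel₀ (by positivity)
  constructor
  · show (∫ x : ℝ, Real.exp (-(σ ^ 2)⁻¹ * x ^ 2) * (physHermite (2 * p)).eval x *
        Fint (-1 + (σ ^ 2)⁻¹) x) = 0
    set f : ℝ → ℝ := fun x => Real.exp (-(σ ^ 2)⁻¹ * x ^ 2) * (physHermite (2 * p)).eval x *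
        Fint (-1 + (σ ^ 2)⁻¹) x with hfdef
    have hneg : ∀ x : ℝ, f (-x) = -f x := by
      intro x
      simp only [hfdef, neg_sq, physHermite_eval_neg, Fint_neg_arg]
      rw [pow_mul]
      norm_num
    have h2 : (∫ x : ℝ, f x) = ∫ x : ℝ, f (-x) := (integral_neg_eq_self f volume).symm
    simp only [hneg] at h2
    rw [integral_neg] at h2
    linarith
  · show (∫ x : ℝ, Real.exp (-(σ ^ 2)⁻¹ * x ^ 2) * (physHermite (2 * p + 1)).eval x *
        Fint (-1 + (σ ^ 2)⁻¹) x) = _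
    induction p with
    | zero =>
      have h := base_general (σ2 := σ ^ 2) hb hσs rfl
      rw [show 2 * 0 + 1 = 1 from rfl, h]
      simp [Nat.factorial]
      ring
    | succ q ih =>
      have hrec := rec_general (σ2 := σ ^ 2) hb hσs rfl (2 * q + 1)
      rw [show 2 * (q + 1) + 1 = (2 * q + 1) + 2 by ring, hrec, ih]
      rw [Nat.factorial_succ]
      push_cast
      ring
end
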